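/- Let f: ℝⁿ → ℝ be ρ-weakly convex (i.e., f + (ρ/2)‖·‖² is convex) and bounded from below. Then for all ε ∈ (0, ρ⁻¹) the proximal mapping P_ε f is single-valued and continuous and the Moreau envelope e_ε f is continuously differentiable with ∇e_ε f(x) = (x − P_ε f(x))/ε. Moreover, for any fixed ε̄ ∈ (0, ρ⁻¹), the single-valued map G: ℝⁿ × (0,∞) → ℝⁿ defined by G(x, ε) = ∇e_ε f(x) when ε ∈ (0, ε̄] and G(x, ε) = ∇e_{ε̄} f(x) when ε > ε̄ is a descent-oriented subdifferential for f. -/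

import Mathlib

open Filter Topology Set
open scoped RealInnerProductSpace NNReal

noncomputable section

variable {E : Type*} [NormedAddCommGroup E] [InnerProductSpace ℝ E]

/-- The Clarke generalized directional derivative of `f` at `x` in direction `d`. -/
def clarkeDeriv (f : E → ℝ) (x d : E) : ℝ :=
  Filter.limsup (fun p : E × ℝ => (f (p.1 + p.2 • d) - f p.1) / p.2)
    ((𝓝 x) ×ˢ (𝓝[>] (0 : ℝ)))

/-- The Clarke subdifferential of `f` at `x`. -/
def clarkeSubdiff (f : E → ℝ) (x : E) : Set E :=
  {v | ∀ d : E, ⟪v, d⟫ ≤ clarkeDeriv f x d}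

/-- Outer limit of `G x ε` along joint sequences `ε_k ↓ 0` and `x_k → x̄`. -/
def SeqJointLimsup (G : E → ℝ → Set E) (xbar : E) : Set E :=
  {u | ∃ (eps : ℕ → ℝ) (xs : ℕ → E) (vs : ℕ → E),
    (∀ k, 0 < eps k) ∧ Tendsto eps atTop (𝓝 0) ∧ Tendsto xs atTop (𝓝 xbar) ∧
    (∀ k, vs k ∈ G (xs k) (eps k)) ∧ Tendsto vs atTop (𝓝 u)}

/-- Outer limit `limsup_{x → xbar} S x` of a set-valued map. -/
def SetMapLimsup (S : E → Set E) (xbar : E) : Set E :=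
  {u | ∃ (xs : ℕ → E) (vs : ℕ → E),
    Tendsto xs atTop (𝓝 xbar) ∧ (∀ k, vs k ∈ S (xs k)) ∧ Tendsto vs atTop (𝓝 u)}

/-- Outer limit of a family of sets `A ε` as `ε ↓ 0`. -/
def FamilyOuterLimit (A : ℝ → Set E) : Set E :=
  {u | ∃ (eps : ℕ → ℝ) (vs : ℕ → E), (∀ k, 0 < eps k) ∧ Tendsto eps atTop (𝓝 0) ∧
    (∀ k, vs k ∈ A (eps k)) ∧ Tendsto vs atTop (𝓝 u)}

/-- Inner limit of a family of sets `A ε` as `ε ↓ 0`. -/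
def FamilyInnerLimit (A : ℝ → Set E) : Set E :=
  {u | ∀ eps : ℕ → ℝ, (∀ k, 0 < eps k) → Tendsto eps atTop (𝓝 0) →
    ∃ vs : ℕ → E, (∀ᶠ k in atTop, vs k ∈ A (eps k)) ∧ Tendsto vs atTop (𝓝 u)}

/-- Painlevé–Kuratowski convergence of the family `A ε` to the set `B` as `ε ↓ 0`. -/
def PKTendsto (A : ℝ → Set E) (B : Set E) : Prop :=
  FamilyOuterLimit A ⊆ B ∧ B ⊆ FamilyInnerLimit A

/-- `g` is the minimal-norm element of `S`. -/
def IsMinNormElt (S : Set E) (g : E) : Prop :=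
  g ∈ S ∧ ∀ v ∈ S, ‖g‖ ≤ ‖v‖

/-- A descent-oriented subdifferential for `f`:  for each fixed `ε > 0` the map
`x ↦ G x ε` is closed-valued and locally bounded, (G1) the joint outer limit as
`ε ↓ 0`, `x → x̄` is contained in the Clarke subdifferential, and (G2) the sets
`limsup_{x → x̄} G x ε` converge in the Painlevé–Kuratowski sense, as `ε ↓ 0`,
to the singleton consisting of the minimal-norm Clarke subgradient. -/
structure IsDescentOrientedSubdiff (f : E → ℝ) (G : E → ℝ → Set E) : Prop where
  closedVals : ∀ ε : ℝ, 0 < ε → ∀ x : E, IsClosed (G x ε)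
  locBounded : ∀ ε : ℝ, 0 < ε → ∀ x : E,
    ∃ δ > (0 : ℝ), ∃ M : ℝ, ∀ y : E, ‖y - x‖ < δ → ∀ v ∈ G y ε, ‖v‖ ≤ M
  outerClarke : ∀ xbar : E, SeqJointLimsup G xbar ⊆ clarkeSubdiff f xbar
  minNormLimit : ∀ xbar : E, ∃ g : E, IsMinNormElt (clarkeSubdiff f xbar) g ∧
    PKTendsto (fun ε => SetMapLimsup (fun x => G x ε) xbar) {g}

/-- The Moreau envelope `e_ε f`. -/
def moreauEnv (f : E → ℝ) (ε : ℝ) (x : E) : ℝ :=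
  ⨅ z : E, (f z + ‖z - x‖ ^ 2 / (2 * ε))

/-- The proximal mapping `P_ε f` (as a set of minimizers). -/
def proxSet (f : E → ℝ) (ε : ℝ) (x : E) : Set E :=
  {z | ∀ w : E, f z + ‖z - x‖ ^ 2 / (2 * ε) ≤ f w + ‖w - x‖ ^ 2 / (2 * ε)}

section Aux

variable {H : Type*} [NormedAddCommGroup H] [InnerProductSpace ℝ H] [FiniteDimensional ℝ H]

private lemma fcont {f : H → ℝ} {ρ : ℝ}
    (hwc : ConvexOn ℝ Set.univ (fun x => f x + ρ / 2 * ‖x‖ ^ 2)) : Continuous f := by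
  have hF : Continuous (fun x : H => f x + ρ / 2 * ‖x‖ ^ 2) := by
    rw [← continuousOn_univ]
    exact hwc.continuousOn isOpen_univ
  have : f = fun x : H => (f x + ρ/2*‖x‖^2) - ρ/2*‖x‖^2 := by ext x; ring
  rw [this]
  exact hF.sub (continuous_const.mul (continuous_norm.pow 2))

private lemma div_ineq_iff {c : ℝ} (hc : 0 < c) (a b a' b' : ℝ) :
    a + b / c ≤ a' + b' / c ↔ c * a + b ≤ c * a' + b' := by
  rw [← sub_nonneg, ← sub_nonneg (b := c * a + b)]
  have h : a' + b'/c - (a + b/c) = (c*a' + b' - (c*a + b))/c := by field_simp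
  rw [h, le_div_iff₀ hc, zero_mul]

private lemma mem_proxSet_iff {f : H → ℝ} {ε : ℝ} (hε : 0 < ε) {x p : H} :
    p ∈ proxSet f ε x ↔ ∀ w, 2*ε*(f p) + ‖p - x‖^2 ≤ 2*ε*(f w) + ‖w - x‖^2 := by
  have h2 : (0:ℝ) < 2*ε := by positivity
  simp only [proxSet, Set.mem_setOf_eq, div_ineq_iff h2]

private lemma midpoint_sq (p q x : H) :
    ‖(1/2 : ℝ) • (p + q) - x‖^2 = (‖p - x‖^2 + ‖q - x‖^2)/2 - ‖q - p‖^2/4 := by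
  have hm : (1/2 : ℝ) • (p + q) - x = (1/2 : ℝ) • ((p - x) + (q - x)) := by module
  rw [hm]
  have h1 : ‖(p-x) + (q-x)‖^2 = ‖p-x‖^2 + 2*⟪p-x, q-x⟫ + ‖q-x‖^2 := norm_add_sq_real _ _
  have h2 : ‖(q-x) - (p-x)‖^2 = ‖q-x‖^2 - 2*⟪q-x, p-x⟫ + ‖p-x‖^2 := norm_sub_sq_real _ _
  have h3 : (q-x) - (p-x) = q - p := by abel
  have h4 : ⟪q-x, p-x⟫ = ⟪p-x, q-x⟫ := real_inner_comm _ _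
  have h5 : ‖(1/2 : ℝ) • ((p-x) + (q-x))‖^2 = (1/2)^2 * ‖(p-x)+(q-x)‖^2 := by
    rw [norm_smul]; norm_num; ring
  rw [h3, h4] at h2
  rw [h5, h1]
  linarith

/-- strong convexity inequality at a prox point, multiplied by `2ε`. -/
private lemma prox_strong {f : H → ℝ} {ρ ε : ℝ} (hρ : 0 < ρ)
    (hwc : ConvexOn ℝ Set.univ (fun x => f x + ρ / 2 * ‖x‖ ^ 2))
    (hε0 : 0 < ε) (hε1 : ε < ρ⁻¹) {x p : H} (hp : p ∈ proxSet f ε x) (q : H) :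
    2*ε*(f p) + ‖p - x‖^2 + ((1 - ρ*ε)/2) * ‖q - p‖^2 ≤ 2*ε*(f q) + ‖q - x‖^2 := by
  set m := (1/2 : ℝ) • (p + q) with hmdef
  have hm := (mem_proxSet_iff hε0).1 hp m
  have hcomb : (1/2 : ℝ) • p + (1/2 : ℝ) • q = m := by rw [hmdef]; module
  have hconv := hwc.2 (Set.mem_univ p) (Set.mem_univ q)
    (by norm_num : (0:ℝ) ≤ 1/2) (by norm_num : (0:ℝ) ≤ 1/2) (by norm_num)
  simp only [hcomb, smul_eq_mul] at hconv
  have h1 : ‖m - x‖^2 = (‖p - x‖^2 + ‖q - x‖^2)/2 - ‖q - p‖^2/4 := midpoint_sq p q x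
  have h2 : ‖m‖^2 = (‖p‖^2 + ‖q‖^2)/2 - ‖q - p‖^2/4 := by
    rw [hmdef]; simpa using midpoint_sq p q 0
  rw [h2] at hconv
  have hc2 : f m ≤ (f p + f q)/2 + ρ/8 * ‖q - p‖^2 := by linarith
  have hmul := mul_le_mul_of_nonneg_left hc2 (by positivity : (0:ℝ) ≤ 2*ε)
  nlinarith [hm, hmul, h1]

private lemma prox_unique {f : H → ℝ} {ρ ε : ℝ} (hρ : 0 < ρ)
    (hwc : ConvexOn ℝ Set.univ (fun x => f x + ρ / 2 * ‖x‖ ^ 2))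
    (hε0 : 0 < ε) (hε1 : ε < ρ⁻¹) {x p q : H}
    (hp : p ∈ proxSet f ε x) (hq : q ∈ proxSet f ε x) : p = q := by
  have h1 := prox_strong hρ hwc hε0 hε1 hp q
  have h2 := prox_strong hρ hwc hε0 hε1 hq p
  have hσ : 0 < 1 - ρ*ε := by
    have := mul_lt_mul_of_pos_left hε1 hρ
    rw [mul_inv_cancel₀ hρ.ne'] at this
    linarith
  have hpq : ‖q - p‖^2 ≤ 0 := by
    have h3 : ‖p - q‖^2 = ‖q - p‖^2 := by rw [← neg_sub, norm_neg]
    nlinarith [h1, h2]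
  have : ‖q - p‖ = 0 := by nlinarith [sq_nonneg ‖q - p‖, norm_nonneg (q - p)]
  rw [norm_eq_zero, sub_eq_zero] at this
  exact this.symm

private lemma prox_exists {f : H → ℝ} {ρ ε : ℝ}
    (hwc : ConvexOn ℝ Set.univ (fun x => f x + ρ / 2 * ‖x‖ ^ 2))
    (hbdd : BddBelow (Set.range f)) (hε0 : 0 < ε) (x : H) :
    ∃ p, p ∈ proxSet f ε x := by
  obtain ⟨B, hB⟩ := hbdd
  have hBf : ∀ z, B ≤ f z := fun z => hB ⟨z, rfl⟩
  haveI : Nonempty H := ⟨0⟩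
  have hcont : Continuous (fun z : H => f z + ‖z - x‖^2/(2*ε)) :=
    (fcont hwc).add (((continuous_id.sub continuous_const).norm.pow 2).div_const _)
  have t1 : Tendsto (fun z : H => ‖z - x‖) (cocompact H) atTop := by
    apply tendsto_atTop_mono (fun z => ?_)
      (tendsto_atTop_add_const_right _ (-‖x‖) tendsto_norm_cocompact_atTop)
    have := norm_sub_norm_le z x
    linarith
  have t2 : Tendsto (fun z : H => ‖z - x‖^2/(2*ε)) (cocompact H) atTop :=
    (tendsto_pow_atTop two_ne_zero).comp t1 |>.atTop_div_const (by positivity)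
  have hco : Tendsto (fun z : H => f z + ‖z - x‖^2/(2*ε)) (cocompact H) atTop := by
    apply tendsto_atTop_mono (fun z => ?_) (tendsto_atTop_add_const_left _ B t2)
    have := hBf z; linarith
  obtain ⟨p, hp⟩ := hcont.exists_forall_le hco
  exact ⟨p, fun w => hp w⟩

end Aux
set_option linter.unusedSectionVars false
set_option linter.unusedVariables false

section Aux2

variable {H : Type*} [NormedAddCommGroup H] [InnerProductSpace ℝ H] [FiniteDimensional ℝ H]

open scoped Classical in
/-- The (single-valued) proximal point, via choice. -/
def proxPt (f : H → ℝ) (ε : ℝ) (x : H) : H :=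
  if h : ∃ p, p ∈ proxSet f ε x then h.choose else 0

private lemma one_sub_rho_eps_pos {ρ ε : ℝ} (hρ : 0 < ρ) (hε1 : ε < ρ⁻¹) : 0 < 1 - ρ*ε := by
  have := mul_lt_mul_of_pos_left hε1 hρ
  rw [mul_inv_cancel₀ hρ.ne'] at this
  linarith

variable {f : H → ℝ} {ρ : ℝ}

private lemma proxPt_mem
    (hwc : ConvexOn ℝ Set.univ (fun x => f x + ρ / 2 * ‖x‖ ^ 2))
    (hbdd : BddBelow (Set.range f)) {ε : ℝ} (hε0 : 0 < ε) (x : H) :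
    proxPt f ε x ∈ proxSet f ε x := by
  have h : ∃ p, p ∈ proxSet f ε x := prox_exists hwc hbdd hε0 x
  classical
  rw [proxPt]
  simp only [dif_pos h]
  exact h.choose_spec

private lemma proxSet_eq_singleton (hρ : 0 < ρ)
    (hwc : ConvexOn ℝ Set.univ (fun x => f x + ρ / 2 * ‖x‖ ^ 2))
    (hbdd : BddBelow (Set.range f)) {ε : ℝ} (hε0 : 0 < ε) (hε1 : ε < ρ⁻¹) (x : H) :
    proxSet f ε x = {proxPt f ε x} := by
  ext q
  simp only [Set.mem_singleton_iff]
  constructor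
  · intro hq; exact (prox_unique hρ hwc hε0 hε1 (proxPt_mem hwc hbdd hε0 x) hq).symm
  · rintro rfl; exact proxPt_mem hwc hbdd hε0 x

private lemma inner_diff_identity (p q x y : H) :
    ‖q - x‖^2 - ‖q - y‖^2 + (‖p - y‖^2 - ‖p - x‖^2) = 2*⟪y - x, q - p⟫ := by
  have e1 : ‖q - x‖^2 = ‖q‖^2 - 2*⟪q,x⟫ + ‖x‖^2 := norm_sub_sq_real _ _
  have e2 : ‖q - y‖^2 = ‖q‖^2 - 2*⟪q,y⟫ + ‖y‖^2 := norm_sub_sq_real _ _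
  have e3 : ‖p - y‖^2 = ‖p‖^2 - 2*⟪p,y⟫ + ‖y‖^2 := norm_sub_sq_real _ _
  have e4 : ‖p - x‖^2 = ‖p‖^2 - 2*⟪p,x⟫ + ‖x‖^2 := norm_sub_sq_real _ _
  have e5 : ⟪y - x, q - p⟫ = ⟪y,q⟫ - ⟪y,p⟫ - ⟪x,q⟫ + ⟪x,p⟫ := by
    rw [inner_sub_left, inner_sub_right, inner_sub_right]; ring
  rw [e1, e2, e3, e4, e5, real_inner_comm q x, real_inner_comm q y,
    real_inner_comm p y, real_inner_comm p x]
  ring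

/-- Lipschitz estimate for points of the prox sets. -/
private lemma prox_lipschitz (hρ : 0 < ρ)
    (hwc : ConvexOn ℝ Set.univ (fun x => f x + ρ / 2 * ‖x‖ ^ 2))
    {ε : ℝ} (hε0 : 0 < ε) (hε1 : ε < ρ⁻¹) {x y p q : H}
    (hp : p ∈ proxSet f ε x) (hq : q ∈ proxSet f ε y) :
    ‖p - q‖ ≤ 2/(1 - ρ*ε) * ‖x - y‖ := by
  have hσ := one_sub_rho_eps_pos hρ hε1
  have h1 := prox_strong hρ hwc hε0 hε1 hp q
  have h2 := prox_strong hρ hwc hε0 hε1 hq p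
  have hid := inner_diff_identity p q x y
  have hsym : ‖p - q‖^2 = ‖q - p‖^2 := by rw [norm_sub_rev]
  rw [hsym] at h2
  have hkey : (1 - ρ*ε) * ‖q - p‖^2 ≤ 2*⟪y - x, q - p⟫ := by linarith
  have hcs : ⟪y - x, q - p⟫ ≤ ‖y - x‖ * ‖q - p‖ := real_inner_le_norm _ _
  rw [norm_sub_rev p q, norm_sub_rev x y]
  rcases eq_or_lt_of_le (norm_nonneg (q - p)) with h0 | h0
  · rw [← h0]; positivity
  · have h3 : (1 - ρ*ε) * ‖q - p‖ ≤ 2 * ‖y - x‖ := by nlinarith [hkey, hcs, h0]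
    rw [div_mul_eq_mul_div, le_div_iff₀ hσ]
    linarith [h3]

private lemma proxPt_lipschitz (hρ : 0 < ρ)
    (hwc : ConvexOn ℝ Set.univ (fun x => f x + ρ / 2 * ‖x‖ ^ 2))
    (hbdd : BddBelow (Set.range f)) {ε : ℝ} (hε0 : 0 < ε) (hε1 : ε < ρ⁻¹) (x y : H) :
    ‖proxPt f ε x - proxPt f ε y‖ ≤ 2/(1 - ρ*ε) * ‖x - y‖ :=
  prox_lipschitz hρ hwc hε0 hε1 (proxPt_mem hwc hbdd hε0 x) (proxPt_mem hwc hbdd hε0 y)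

private lemma proxPt_continuous (hρ : 0 < ρ)
    (hwc : ConvexOn ℝ Set.univ (fun x => f x + ρ / 2 * ‖x‖ ^ 2))
    (hbdd : BddBelow (Set.range f)) {ε : ℝ} (hε0 : 0 < ε) (hε1 : ε < ρ⁻¹) :
    Continuous (proxPt f ε) := by
  have hσ := one_sub_rho_eps_pos hρ hε1
  have : LipschitzWith (Real.toNNReal (2/(1 - ρ*ε))) (proxPt f ε) := by
    apply LipschitzWith.of_dist_le_mul
    intro x y
    rw [dist_eq_norm, dist_eq_norm]
    calc ‖proxPt f ε x - proxPt f ε y‖ ≤ 2/(1-ρ*ε) * ‖x - y‖ :=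
          proxPt_lipschitz hρ hwc hbdd hε0 hε1 x y
      _ ≤ _ := by
          apply mul_le_mul_of_nonneg_right _ (norm_nonneg _)
          exact (Real.le_coe_toNNReal _)
  exact this.continuous

private lemma moreau_bddBelow (hbdd : BddBelow (Set.range f)) {ε : ℝ} (hε0 : 0 < ε) (x : H) :
    BddBelow (Set.range fun z : H => f z + ‖z - x‖^2/(2*ε)) := by
  obtain ⟨B, hB⟩ := hbdd
  refine ⟨B, ?_⟩
  rintro r ⟨z, rfl⟩
  have h1 : B ≤ f z := hB ⟨z, rfl⟩
  have h2 : 0 ≤ ‖z - x‖^2/(2*ε) := by positivity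
  simp only []
  linarith

private lemma moreau_eq (hbdd : BddBelow (Set.range f)) {ε : ℝ} (hε0 : 0 < ε) {x p : H}
    (hp : p ∈ proxSet f ε x) :
    moreauEnv f ε x = f p + ‖p - x‖^2/(2*ε) := by
  apply le_antisymm
  · exact ciInf_le (moreau_bddBelow hbdd hε0 x) p
  · exact le_ciInf fun w => hp w

private lemma moreau_le (hbdd : BddBelow (Set.range f)) {ε : ℝ} (hε0 : 0 < ε) (x z : H) :
    moreauEnv f ε x ≤ f z + ‖z - x‖^2/(2*ε) :=
  ciInf_le (moreau_bddBelow hbdd hε0 x) z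

/-- key upper estimate for the envelope. -/
private lemma moreau_upper (hbdd : BddBelow (Set.range f)) {ε : ℝ} (hε0 : 0 < ε) {x p : H}
    (hp : p ∈ proxSet f ε x) (y : H) :
    moreauEnv f ε y ≤ moreauEnv f ε x + ⟪(1/ε) • (x - p), y - x⟫ + ‖y - x‖^2/(2*ε) := by
  have h1 : moreauEnv f ε y ≤ f p + ‖p - y‖^2/(2*ε) := moreau_le hbdd hε0 y p
  have h2 : moreauEnv f ε x = f p + ‖p - x‖^2/(2*ε) := moreau_eq hbdd hε0 hp
  have hexp : ‖p - y‖^2 = ‖p - x‖^2 + 2*⟪p - x, x - y⟫ + ‖x - y‖^2 := by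
    have h : p - y = (p - x) + (x - y) := by abel
    rw [h]; exact norm_add_sq_real _ _
  have hinner : ⟪(1/ε) • (x - p), y - x⟫ = (1/ε) * ⟪x - p, y - x⟫ := real_inner_smul_left _ _ _
  have hflip : ⟪p - x, x - y⟫ = ⟪x - p, y - x⟫ := by
    rw [← neg_sub x p, ← neg_sub y x, inner_neg_neg]
  have hnn : ‖x - y‖ = ‖y - x‖ := by rw [← neg_sub y x, norm_neg]
  rw [h2, hinner]
  have : f p + ‖p - y‖^2/(2*ε) =
      f p + ‖p - x‖^2/(2*ε) + 1/ε * ⟪x - p, y - x⟫ + ‖y - x‖^2/(2*ε) := by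
    rw [hexp, hflip, hnn]
    field_simp
    ring
  linarith [h1, this.le, this.ge]

end Aux2
section Aux3

variable {H : Type*} [NormedAddCommGroup H] [InnerProductSpace ℝ H] [FiniteDimensional ℝ H]
variable {f : H → ℝ} {ρ : ℝ}

private lemma vfield_lipschitz (hρ : 0 < ρ)
    (hwc : ConvexOn ℝ Set.univ (fun x => f x + ρ / 2 * ‖x‖ ^ 2))
    (hbdd : BddBelow (Set.range f)) {ε : ℝ} (hε0 : 0 < ε) (hε1 : ε < ρ⁻¹) (x y : H) :
    ‖(1/ε) • (y - proxPt f ε y) - (1/ε) • (x - proxPt f ε x)‖ ≤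
      (1/ε) * (1 + 2/(1 - ρ*ε)) * ‖y - x‖ := by
  have hσ := one_sub_rho_eps_pos hρ hε1
  have h1 : (1/ε) • (y - proxPt f ε y) - (1/ε) • (x - proxPt f ε x)
      = (1/ε) • ((y - x) - (proxPt f ε y - proxPt f ε x)) := by
    module
  rw [h1, norm_smul]
  have h2 : ‖(y - x) - (proxPt f ε y - proxPt f ε x)‖ ≤ ‖y - x‖ + 2/(1-ρ*ε)*‖y - x‖ := by
    refine (norm_sub_le _ _).trans ?_
    have := proxPt_lipschitz hρ hwc hbdd hε0 hε1 y x
    linarith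
  have h3 : ‖(1:ℝ)/ε‖ = 1/ε := by rw [Real.norm_eq_abs, abs_of_pos (by positivity)]
  rw [h3]
  calc (1/ε) * ‖(y - x) - (proxPt f ε y - proxPt f ε x)‖
      ≤ (1/ε) * (‖y - x‖ + 2/(1-ρ*ε)*‖y - x‖) := by
        apply mul_le_mul_of_nonneg_left h2 (by positivity)
    _ = (1/ε) * (1 + 2/(1 - ρ*ε)) * ‖y - x‖ := by ring

private lemma moreau_hasGradient (hρ : 0 < ρ)
    (hwc : ConvexOn ℝ Set.univ (fun x => f x + ρ / 2 * ‖x‖ ^ 2))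
    (hbdd : BddBelow (Set.range f)) {ε : ℝ} (hε0 : 0 < ε) (hε1 : ε < ρ⁻¹) (x : H) :
    HasGradientAt (moreauEnv f ε) ((1/ε) • (x - proxPt f ε x)) x := by
  have hσ := one_sub_rho_eps_pos hρ hε1
  have hCpos : 0 < (1/ε) * (1 + 2/(1 - ρ*ε)) := by positivity
  set C : ℝ := (1/ε) * (1 + 2/(1 - ρ*ε)) with hC
  have hKpos : 0 < C + 1/(2*ε) := by positivity
  set K : ℝ := C + 1/(2*ε) with hK
  have hbound : ∀ y : H, |moreauEnv f ε y - moreauEnv f ε x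
      - ⟪(1/ε) • (x - proxPt f ε x), y - x⟫| ≤ K * ‖y - x‖^2 := by
    intro y
    have hKmul : K * ‖y - x‖^2 = C * ‖y - x‖^2 + ‖y - x‖^2/(2*ε) := by rw [hK]; ring
    have hup : moreauEnv f ε y ≤ moreauEnv f ε x + ⟪(1/ε) • (x - proxPt f ε x), y - x⟫
        + ‖y - x‖^2/(2*ε) := moreau_upper hbdd hε0 (proxPt_mem hwc hbdd hε0 x) y
    have hlow' : moreauEnv f ε x ≤ moreauEnv f ε y + ⟪(1/ε) • (y - proxPt f ε y), x - y⟫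
        + ‖x - y‖^2/(2*ε) := moreau_upper hbdd hε0 (proxPt_mem hwc hbdd hε0 y) x
    have hvy : ⟪(1/ε) • (y - proxPt f ε y), x - y⟫
        = -⟪(1/ε) • (y - proxPt f ε y), y - x⟫ := by
      rw [← inner_neg_right, neg_sub]
    have hinndiff : ⟪(1/ε) • (y - proxPt f ε y), y - x⟫
        - ⟪(1/ε) • (x - proxPt f ε x), y - x⟫
        = ⟪(1/ε) • (y - proxPt f ε y) - (1/ε) • (x - proxPt f ε x), y - x⟫ := by
      rw [inner_sub_left]
    have hcs : |⟪(1/ε) • (y - proxPt f ε y) - (1/ε) • (x - proxPt f ε x), y - x⟫|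
        ≤ ‖(1/ε) • (y - proxPt f ε y) - (1/ε) • (x - proxPt f ε x)‖ * ‖y - x‖ :=
      abs_real_inner_le_norm _ _
    have hvlip := vfield_lipschitz hρ hwc hbdd hε0 hε1 x y
    rw [← hC] at hvlip
    have hnrev : ‖x - y‖ = ‖y - x‖ := norm_sub_rev _ _
    rw [hnrev] at hlow'
    have h7 : (0:ℝ) ≤ C * ‖y - x‖^2 := by positivity
    have h5 : ⟪(1/ε) • (y - proxPt f ε y) - (1/ε) • (x - proxPt f ε x), y - x⟫
        ≥ -(C * ‖y - x‖^2) := by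
      have := (abs_le.1 hcs).1
      nlinarith [hvlip, norm_nonneg (y - x),
        norm_nonneg ((1/ε) • (y - proxPt f ε y) - (1/ε) • (x - proxPt f ε x))]
    rw [abs_le]
    constructor
    · rw [hvy] at hlow'
      rw [ge_iff_le, ← sub_nonneg] at h5
      linarith [hlow', hKmul.le, hKmul.ge, h5, hinndiff.le, hinndiff.ge]
    · linarith [hup, hKmul.le, hKmul.ge, h7]
  rw [hasGradientAt_iff_isLittleO]
  rw [Asymptotics.isLittleO_iff]
  intro c hc
  have hmem : Metric.ball x (c/K) ∈ 𝓝 x := Metric.ball_mem_nhds x (by positivity)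
  filter_upwards [hmem] with y hy
  have hdist : ‖y - x‖ < c/K := by rwa [Metric.mem_ball, dist_eq_norm] at hy
  have h1 := hbound y
  have h2 : K * ‖y - x‖^2 ≤ c * ‖y - x‖ := by
    have h3 : K * ‖y - x‖ ≤ c := by
      rw [mul_comm, ← le_div_iff₀ hKpos]
      exact hdist.le
    nlinarith [norm_nonneg (y - x), h3]
  calc ‖moreauEnv f ε y - moreauEnv f ε x - ⟪(1/ε) • (x - proxPt f ε x), y - x⟫‖
      = |moreauEnv f ε y - moreauEnv f ε x - ⟪(1/ε) • (x - proxPt f ε x), y - x⟫| := rfl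
    _ ≤ K * ‖y - x‖^2 := h1
    _ ≤ c * ‖y - x‖ := h2

end Aux3
section Aux4

variable {H : Type*} [NormedAddCommGroup H] [InnerProductSpace ℝ H] [FiniteDimensional ℝ H]
variable {f : H → ℝ} {ρ : ℝ}

/-- The convex subgradient inequality for `F = f + ρ/2‖·‖²` at a prox point. -/
private lemma prox_subgrad (hρ : 0 < ρ)
    (hwc : ConvexOn ℝ Set.univ (fun x => f x + ρ / 2 * ‖x‖ ^ 2))
    {ε : ℝ} (hε0 : 0 < ε) {x p : H} (hp : p ∈ proxSet f ε x) (w : H) :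
    f p + ρ/2*‖p‖^2 + ⟪(1/ε) • (x - p) + ρ • p, w - p⟫ ≤ f w + ρ/2*‖w‖^2 := by
  set d : H := w - p with hd
  have ha : ⟪x - p, d⟫ = ε * ⟪(1/ε) • (x - p), d⟫ := by
    rw [real_inner_smul_left]
    field_simp
  have hsplit : ⟪(1/ε) • (x - p) + ρ • p, d⟫ = ⟪(1/ε) • (x - p), d⟫ + ρ * ⟪p, d⟫ := by
    rw [inner_add_left, real_inner_smul_left, real_inner_smul_left]
  have key : ∀ t : ℝ, 0 < t → t ≤ 1 →
      ⟪(1/ε) • (x - p), d⟫ + ρ * ⟪p, d⟫ ≤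
        (f w + ρ/2*‖w‖^2 - (f p + ρ/2*‖p‖^2)) + t * (‖d‖^2/(2*ε)) := by
    intro t ht ht1
    have hprox := (mem_proxSet_iff hε0).1 hp (p + t • d)
    have hs1 : p + t • d - x = (p - x) + t • d := by module
    have hexp1 : ‖p + t • d - x‖^2 = ‖p - x‖^2 + 2*t*⟪p - x, d⟫ + t^2*‖d‖^2 := by
      rw [hs1, norm_add_sq_real, real_inner_smul_right, norm_smul, Real.norm_eq_abs,
        abs_of_pos ht, mul_pow]
      ring
    have hexp2 : ‖p + t • d‖^2 = ‖p‖^2 + 2*t*⟪p, d⟫ + t^2*‖d‖^2 := by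
      rw [norm_add_sq_real, real_inner_smul_right, norm_smul, Real.norm_eq_abs,
        abs_of_pos ht, mul_pow]
      ring
    have hpxd : ⟪p - x, d⟫ = -⟪x - p, d⟫ := by
      rw [← neg_sub x p, inner_neg_left]
    have htpd : t * ⟪p - x, d⟫ = -(2*ε*t*⟪(1/ε) • (x - p), d⟫)/2 := by
      rw [hpxd, ha]; ring
    have hprox' : 2*ε*(f p) ≤ 2*ε*(f (p + t • d)) + 2*t*⟪p - x, d⟫ + t^2*‖d‖^2 := by
      rw [hexp1] at hprox; linarith
    have hcomb : (1-t) • p + t • w = p + t • d := by rw [hd]; module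
    have hconv := hwc.2 (Set.mem_univ p) (Set.mem_univ w) (by linarith : (0:ℝ) ≤ 1-t)
      ht.le (by ring)
    simp only [smul_eq_mul] at hconv
    rw [hcomb, hexp2] at hconv
    have hmul := mul_le_mul_of_nonneg_left hconv (by positivity : (0:ℝ) ≤ 2*ε)
    have hnn : (0:ℝ) ≤ ε*ρ*t^2*‖d‖^2 := by positivity
    have combined : 2*ε*t*(⟪(1/ε) • (x - p), d⟫ + ρ*⟪p, d⟫) ≤
        2*ε*t*(f w + ρ/2*‖w‖^2 - (f p + ρ/2*‖p‖^2)) + t^2*‖d‖^2 := by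
      nlinarith [hprox', htpd, hmul, hnn]
    have h2εt : (0:ℝ) < 2*ε*t := by positivity
    have hdiv : (2*ε*t*(⟪(1/ε) • (x - p), d⟫ + ρ*⟪p, d⟫))/(2*ε*t) ≤
        (2*ε*t*(f w + ρ/2*‖w‖^2 - (f p + ρ/2*‖p‖^2)) + t^2*‖d‖^2)/(2*ε*t) := by
      gcongr
    have e1 : (2*ε*t*(⟪(1/ε) • (x - p), d⟫ + ρ*⟪p, d⟫))/(2*ε*t)
        = ⟪(1/ε) • (x - p), d⟫ + ρ*⟪p, d⟫ := by field_simp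
    have e2 : (2*ε*t*(f w + ρ/2*‖w‖^2 - (f p + ρ/2*‖p‖^2)) + t^2*‖d‖^2)/(2*ε*t)
        = (f w + ρ/2*‖w‖^2 - (f p + ρ/2*‖p‖^2)) + t*(‖d‖^2/(2*ε)) := by
      field_simp
    rw [e1, e2] at hdiv
    exact hdiv
  have hlim : Tendsto (fun t : ℝ => (f w + ρ/2*‖w‖^2 - (f p + ρ/2*‖p‖^2)) + t*(‖d‖^2/(2*ε)))
      (𝓝[>] (0:ℝ))
      (𝓝 ((f w + ρ/2*‖w‖^2 - (f p + ρ/2*‖p‖^2)) + 0*(‖d‖^2/(2*ε)))) := by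
    apply Filter.Tendsto.mono_left _ nhdsWithin_le_nhds
    exact (continuous_const.add (continuous_id.mul continuous_const)).tendsto 0
  have hev : ∀ᶠ t in 𝓝[>] (0:ℝ),
      ⟪(1/ε) • (x - p), d⟫ + ρ * ⟪p, d⟫ ≤
        (f w + ρ/2*‖w‖^2 - (f p + ρ/2*‖p‖^2)) + t*(‖d‖^2/(2*ε)) := by
    filter_upwards [Ioc_mem_nhdsGT_of_mem (Set.mem_Ico.2 ⟨le_refl (0:ℝ), zero_lt_one⟩)]
      with t ht
    exact key t ht.1 ht.2
  have hfin := ge_of_tendsto hlim hev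
  rw [hsplit]
  linarith [hfin]

end Aux4
section Aux5

variable {H : Type*} [NormedAddCommGroup H] [InnerProductSpace ℝ H] [FiniteDimensional ℝ H]
variable {f : H → ℝ} {ρ : ℝ}

/-- upper bound for difference quotients of a weakly convex function. -/
private lemma quot_upper (hρ : 0 < ρ)
    (hwc : ConvexOn ℝ Set.univ (fun x => f x + ρ / 2 * ‖x‖ ^ 2))
    (d y : H) {t : ℝ} (ht : 0 < t) (ht1 : t ≤ 1) :
    (f (y + t • d) - f y)/t ≤
      (f (y + d) + ρ/2*‖y + d‖^2) - (f y + ρ/2*‖y‖^2) - ρ*⟪y, d⟫ := by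
  have hcomb : (1-t) • y + t • (y + d) = y + t • d := by module
  have hconv := hwc.2 (Set.mem_univ y) (Set.mem_univ (y + d)) (by linarith : (0:ℝ) ≤ 1-t)
    ht.le (by ring)
  simp only [smul_eq_mul] at hconv
  rw [hcomb] at hconv
  have hexp : ‖y + t • d‖^2 = ‖y‖^2 + 2*t*⟪y, d⟫ + t^2*‖d‖^2 := by
    rw [norm_add_sq_real, real_inner_smul_right, norm_smul, Real.norm_eq_abs,
      abs_of_pos ht, mul_pow]
    ring
  rw [hexp] at hconv
  have hnn : (0:ℝ) ≤ ρ*t^2*‖d‖^2 := by positivity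
  rw [div_le_iff₀ ht]
  nlinarith [hconv, hnn]

/-- lower bound for difference quotients of a weakly convex function. -/
private lemma quot_lower (hρ : 0 < ρ)
    (hwc : ConvexOn ℝ Set.univ (fun x => f x + ρ / 2 * ‖x‖ ^ 2))
    (d y : H) {t : ℝ} (ht : 0 < t) (ht1 : t ≤ 1) :
    (f y - f (y - d)) - ρ*‖d‖^2 ≤ (f (y + t • d) - f y)/t := by
  have h1t : (0:ℝ) < 1 + t := by linarith
  have e1 : (1+t) * (t/(1+t)) = t := by field_simp
  have e2 : (1+t) * (1/(1+t)) = 1 := by field_simp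
  have hab : t/(1+t) + 1/(1+t) = 1 := by field_simp; ring
  have hz : (1/(1+t))*t - t/(1+t) = 0 := by ring
  have hcomb : (t/(1+t)) • (y - d) + (1/(1+t)) • (y + t • d) = y := by
    calc (t/(1+t)) • (y - d) + (1/(1+t)) • (y + t • d)
        = (t/(1+t) + 1/(1+t)) • y + ((1/(1+t))*t - t/(1+t)) • d := by module
      _ = y := by rw [hab, hz, one_smul, zero_smul, add_zero]
  have hconv := hwc.2 (Set.mem_univ (y - d)) (Set.mem_univ (y + t • d))
    (by positivity : (0:ℝ) ≤ t/(1+t)) (by positivity : (0:ℝ) ≤ 1/(1+t))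
    (by field_simp; ring)
  simp only [smul_eq_mul] at hconv
  rw [hcomb] at hconv
  have hexp : ‖y + t • d‖^2 = ‖y‖^2 + 2*t*⟪y, d⟫ + t^2*‖d‖^2 := by
    rw [norm_add_sq_real, real_inner_smul_right, norm_smul, Real.norm_eq_abs,
      abs_of_pos ht, mul_pow]
    ring
  have hexp2 : ‖y - d‖^2 = ‖y‖^2 - 2*⟪y, d⟫ + ‖d‖^2 := norm_sub_sq_real _ _
  rw [hexp, hexp2] at hconv
  have hmul' : (1+t)*(f y + ρ/2*‖y‖^2) ≤
      t*(f (y - d) + ρ/2*(‖y‖^2 - 2*⟪y, d⟫ + ‖d‖^2))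
      + (f (y + t • d) + ρ/2*(‖y‖^2 + 2*t*⟪y, d⟫ + t^2*‖d‖^2)) := by
    calc (1+t)*(f y + ρ/2*‖y‖^2)
        ≤ (1+t) * (t/(1+t) * (f (y - d) + ρ/2*(‖y‖^2 - 2*⟪y, d⟫ + ‖d‖^2))
          + 1/(1+t) * (f (y + t • d) + ρ/2*(‖y‖^2 + 2*t*⟪y, d⟫ + t^2*‖d‖^2))) :=
          mul_le_mul_of_nonneg_left hconv h1t.le
      _ = _ := by field_simp
  rw [le_div_iff₀ ht]
  have hnn2 : (0:ℝ) ≤ ρ*t*‖d‖^2*(1 - t) := by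
    have : (0:ℝ) ≤ 1 - t := by linarith
    positivity
  nlinarith [hmul', hnn2]

private lemma clarke_bddAbove (hρ : 0 < ρ)
    (hwc : ConvexOn ℝ Set.univ (fun x => f x + ρ / 2 * ‖x‖ ^ 2)) (xbar d : H) :
    Filter.IsBoundedUnder (· ≤ ·) ((𝓝 xbar) ×ˢ (𝓝[>] (0:ℝ)))
      (fun q : H × ℝ => (f (q.1 + q.2 • d) - f q.1) / q.2) := by
  have hψ : Continuous (fun y : H =>
      (f (y + d) + ρ/2*‖y + d‖^2) - (f y + ρ/2*‖y‖^2) - ρ*⟪y, d⟫) := by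
    have hf := fcont hwc
    exact (((hf.comp (continuous_id.add continuous_const)).add
      (continuous_const.mul ((continuous_id.add continuous_const).norm.pow 2))).sub
      (hf.add (continuous_const.mul (continuous_norm.pow 2)))).sub
      (continuous_const.mul (continuous_id.inner continuous_const))
  have hψtend : Tendsto (fun q : H × ℝ =>
      (f (q.1 + d) + ρ/2*‖q.1 + d‖^2) - (f q.1 + ρ/2*‖q.1‖^2) - ρ*⟪q.1, d⟫)
      ((𝓝 xbar) ×ˢ (𝓝[>] (0:ℝ)))
      (𝓝 ((f (xbar + d) + ρ/2*‖xbar + d‖^2) - (f xbar + ρ/2*‖xbar‖^2) - ρ*⟪xbar, d⟫)) :=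
    (hψ.tendsto xbar).comp tendsto_fst
  have hEub : ∀ᶠ q : H × ℝ in (𝓝 xbar) ×ˢ (𝓝[>] (0:ℝ)),
      (f (q.1 + q.2 • d) - f q.1) / q.2 ≤
      (f (q.1 + d) + ρ/2*‖q.1 + d‖^2) - (f q.1 + ρ/2*‖q.1‖^2) - ρ*⟪q.1, d⟫ := by
    have h2 : ∀ᶠ t in 𝓝[>] (0:ℝ), t ∈ Set.Ioc (0:ℝ) 1 :=
      Ioc_mem_nhdsGT_of_mem (Set.mem_Ico.2 ⟨le_refl (0:ℝ), zero_lt_one⟩)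
    filter_upwards [h2.prod_inr (𝓝 xbar)] with q hq
    exact quot_upper hρ hwc d q.1 hq.1 hq.2
  exact hψtend.isBoundedUnder_le.mono_le hEub

private lemma clarke_cobdd (hρ : 0 < ρ)
    (hwc : ConvexOn ℝ Set.univ (fun x => f x + ρ / 2 * ‖x‖ ^ 2)) (xbar d : H) :
    Filter.IsCoboundedUnder (· ≤ ·) ((𝓝 xbar) ×ˢ (𝓝[>] (0:ℝ)))
      (fun q : H × ℝ => (f (q.1 + q.2 • d) - f q.1) / q.2) := by
  have hχ : Continuous (fun y : H => (f y - f (y - d)) - ρ*‖d‖^2) := by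
    have hf := fcont hwc
    exact (hf.sub (hf.comp (continuous_id.sub continuous_const))).sub continuous_const
  have hχtend : Tendsto (fun q : H × ℝ => (f q.1 - f (q.1 - d)) - ρ*‖d‖^2)
      ((𝓝 xbar) ×ˢ (𝓝[>] (0:ℝ)))
      (𝓝 ((f xbar - f (xbar - d)) - ρ*‖d‖^2)) :=
    (hχ.tendsto xbar).comp tendsto_fst
  have hElb : ∀ᶠ q : H × ℝ in (𝓝 xbar) ×ˢ (𝓝[>] (0:ℝ)),
      (f q.1 - f (q.1 - d)) - ρ*‖d‖^2 ≤ (f (q.1 + q.2 • d) - f q.1) / q.2 := by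
    have h2 : ∀ᶠ t in 𝓝[>] (0:ℝ), t ∈ Set.Ioc (0:ℝ) 1 :=
      Ioc_mem_nhdsGT_of_mem (Set.mem_Ico.2 ⟨le_refl (0:ℝ), zero_lt_one⟩)
    filter_upwards [h2.prod_inr (𝓝 xbar)] with q hq
    exact quot_lower hρ hwc d q.1 hq.1 hq.2
  exact (hχtend.isBoundedUnder_ge.mono_ge hElb).isCoboundedUnder_le

private lemma clarkeDeriv_le (hρ : 0 < ρ)
    (hwc : ConvexOn ℝ Set.univ (fun x => f x + ρ / 2 * ‖x‖ ^ 2)) (xbar d : H) :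
    clarkeDeriv f xbar d ≤
      (f (xbar + d) + ρ/2*‖xbar + d‖^2) - (f xbar + ρ/2*‖xbar‖^2) - ρ*⟪xbar, d⟫ := by
  have hψ : Continuous (fun y : H =>
      (f (y + d) + ρ/2*‖y + d‖^2) - (f y + ρ/2*‖y‖^2) - ρ*⟪y, d⟫) := by
    have hf := fcont hwc
    exact (((hf.comp (continuous_id.add continuous_const)).add
      (continuous_const.mul ((continuous_id.add continuous_const).norm.pow 2))).sub
      (hf.add (continuous_const.mul (continuous_norm.pow 2)))).sub
      (continuous_const.mul (continuous_id.inner continuous_const))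
  have hψtend : Tendsto (fun q : H × ℝ =>
      (f (q.1 + d) + ρ/2*‖q.1 + d‖^2) - (f q.1 + ρ/2*‖q.1‖^2) - ρ*⟪q.1, d⟫)
      ((𝓝 xbar) ×ˢ (𝓝[>] (0:ℝ)))
      (𝓝 ((f (xbar + d) + ρ/2*‖xbar + d‖^2) - (f xbar + ρ/2*‖xbar‖^2) - ρ*⟪xbar, d⟫)) :=
    (hψ.tendsto xbar).comp tendsto_fst
  have hEub : ∀ᶠ q : H × ℝ in (𝓝 xbar) ×ˢ (𝓝[>] (0:ℝ)),
      (f (q.1 + q.2 • d) - f q.1) / q.2 ≤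
      (f (q.1 + d) + ρ/2*‖q.1 + d‖^2) - (f q.1 + ρ/2*‖q.1‖^2) - ρ*⟪q.1, d⟫ := by
    have h2 : ∀ᶠ t in 𝓝[>] (0:ℝ), t ∈ Set.Ioc (0:ℝ) 1 :=
      Ioc_mem_nhdsGT_of_mem (Set.mem_Ico.2 ⟨le_refl (0:ℝ), zero_lt_one⟩)
    filter_upwards [h2.prod_inr (𝓝 xbar)] with q hq
    exact quot_upper hρ hwc d q.1 hq.1 hq.2
  calc clarkeDeriv f xbar d
      ≤ Filter.limsup (fun q : H × ℝ =>
          (f (q.1 + d) + ρ/2*‖q.1 + d‖^2) - (f q.1 + ρ/2*‖q.1‖^2) - ρ*⟪q.1, d⟫)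
          ((𝓝 xbar) ×ˢ (𝓝[>] (0:ℝ))) :=
        Filter.limsup_le_limsup hEub (clarke_cobdd hρ hwc xbar d)
          hψtend.isBoundedUnder_le
    _ = _ := hψtend.limsup_eq

private lemma subgrad_le_clarkeDeriv (hρ : 0 < ρ)
    (hwc : ConvexOn ℝ Set.univ (fun x => f x + ρ / 2 * ‖x‖ ^ 2)) {xbar u : H}
    (hu : ∀ w, f xbar + ρ/2*‖xbar‖^2 + ⟪u + ρ • xbar, w - xbar⟫ ≤ f w + ρ/2*‖w‖^2)
    (d : H) : ⟪u, d⟫ ≤ clarkeDeriv f xbar d := by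
  apply le_of_forall_pos_le_add
  intro δ hδ
  have hkey : ⟪u, d⟫ - δ ≤ clarkeDeriv f xbar d := by
    set t₀ : ℝ := min 1 (δ/(ρ/2*‖d‖^2 + 1)) with ht₀
    have ht₀pos : 0 < t₀ := by
      rw [ht₀]; apply lt_min zero_lt_one; positivity
    have hev : ∀ᶠ t in 𝓝[>] (0:ℝ), ⟪u, d⟫ - δ ≤ (f (xbar + t • d) - f xbar)/t := by
      filter_upwards [Ioc_mem_nhdsGT_of_mem
        (Set.mem_Ico.2 ⟨le_refl (0:ℝ), ht₀pos⟩)] with t ht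
      obtain ⟨ht1, ht2⟩ := ht
      have hu' := hu (xbar + t • d)
      have hsub : xbar + t • d - xbar = t • d := by abel
      rw [hsub] at hu'
      have hinner : ⟪u + ρ • xbar, t • d⟫ = t*⟪u, d⟫ + ρ*t*⟪xbar, d⟫ := by
        rw [real_inner_smul_right, inner_add_left, real_inner_smul_left]
        ring
      have hexp : ‖xbar + t • d‖^2 = ‖xbar‖^2 + 2*t*⟪xbar, d⟫ + t^2*‖d‖^2 := by
        rw [norm_add_sq_real, real_inner_smul_right, norm_smul, Real.norm_eq_abs,
          abs_of_pos ht1, mul_pow]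
        ring
      rw [hinner, hexp] at hu'
      have hq : t*⟪u, d⟫ - ρ/2*t^2*‖d‖^2 ≤ f (xbar + t • d) - f xbar := by nlinarith [hu']
      have hsmall : ρ/2*t*‖d‖^2 ≤ δ := by
        have h3 : t ≤ δ/(ρ/2*‖d‖^2 + 1) := le_trans ht2 (min_le_right _ _)
        have h4 : t * (ρ/2*‖d‖^2 + 1) ≤ δ := by
          rw [← le_div_iff₀ (by positivity : (0:ℝ) < ρ/2*‖d‖^2 + 1)]
          exact h3
        nlinarith [ht1.le]
      rw [le_div_iff₀ ht1]
      nlinarith [hq, hsmall, ht1.le]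
    have hT : Tendsto (fun t : ℝ => ((xbar : H), t)) (𝓝[>] (0:ℝ))
        ((𝓝 xbar) ×ˢ (𝓝[>] (0:ℝ))) :=
      Filter.Tendsto.prodMk tendsto_const_nhds tendsto_id
    have hfreq : ∃ᶠ q : H × ℝ in (𝓝 xbar) ×ˢ (𝓝[>] (0:ℝ)),
        ⟪u, d⟫ - δ ≤ (f (q.1 + q.2 • d) - f q.1) / q.2 :=
      hT.frequently hev.frequently
    exact Filter.le_limsup_of_frequently_le hfreq (clarke_bddAbove hρ hwc xbar d)
  linarith

/-- characterization of the Clarke subdifferential of a weakly convex function as the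
convex subdifferential of `f + ρ/2‖·‖²` shifted by `ρ • xbar`. -/
private lemma clarke_char (hρ : 0 < ρ)
    (hwc : ConvexOn ℝ Set.univ (fun x => f x + ρ / 2 * ‖x‖ ^ 2)) (xbar u : H) :
    u ∈ clarkeSubdiff f xbar ↔
      ∀ w, f xbar + ρ/2*‖xbar‖^2 + ⟪u + ρ • xbar, w - xbar⟫ ≤ f w + ρ/2*‖w‖^2 := by
  constructor
  · intro h w
    have h1 : ⟪u, w - xbar⟫ ≤ clarkeDeriv f xbar (w - xbar) := h (w - xbar)
    have h2 := clarkeDeriv_le hρ hwc xbar (w - xbar)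
    have h3 : xbar + (w - xbar) = w := by abel
    rw [h3] at h2
    have h4 : ⟪u + ρ • xbar, w - xbar⟫ = ⟪u, w - xbar⟫ + ρ*⟪xbar, w - xbar⟫ := by
      rw [inner_add_left, real_inner_smul_left]
    rw [h4]
    linarith [h1.trans h2]
  · intro h d
    exact subgrad_le_clarkeDeriv hρ hwc h d

end Aux5
section Aux6

variable {H : Type*} [NormedAddCommGroup H] [InnerProductSpace ℝ H] [FiniteDimensional ℝ H]
variable {f : H → ℝ} {ρ : ℝ}

/-- limits of prox-gradients along `ε ↓ 0`, `x → x̄` are subgradients of `F`. -/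
private lemma limit_subgrad (hρ : 0 < ρ)
    (hwc : ConvexOn ℝ Set.univ (fun x => f x + ρ / 2 * ‖x‖ ^ 2))
    (hbdd : BddBelow (Set.range f)) {xbar u : H} {eps : ℕ → ℝ} {xs vs : ℕ → H}
    (heps0 : ∀ k, 0 < eps k) (heps : Tendsto eps atTop (𝓝 0))
    (hxs : Tendsto xs atTop (𝓝 xbar))
    (hvs : ∀ k, vs k = (1/eps k) • (xs k - proxPt f (eps k) (xs k)))
    (hv : Tendsto vs atTop (𝓝 u)) (w : H) :
    f xbar + ρ/2*‖xbar‖^2 + ⟪u + ρ • xbar, w - xbar⟫ ≤ f w + ρ/2*‖w‖^2 := by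
  set ps : ℕ → H := fun k => proxPt f (eps k) (xs k) with hps_def
  have hmem : ∀ k, ps k ∈ proxSet f (eps k) (xs k) :=
    fun k => proxPt_mem hwc hbdd (heps0 k) (xs k)
  obtain ⟨B, hB⟩ := hbdd
  have hBf : ∀ z, B ≤ f z := fun z => hB ⟨z, rfl⟩
  have hfc := fcont hwc
  have hdist : ∀ k, ‖ps k - xs k‖^2 ≤ 2*(eps k)*(f (xs k) - B) := by
    intro k
    have h1 := (mem_proxSet_iff (heps0 k)).1 (hmem k) (xs k)
    rw [sub_self, norm_zero] at h1
    have h2 := mul_le_mul_of_nonneg_left (hBf (ps k)) (by have := heps0 k; positivity : (0:ℝ) ≤ 2*eps k)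
    nlinarith [h1, h2]
  have htend0 : Tendsto (fun k => 2*(eps k)*(f (xs k) - B)) atTop (𝓝 0) := by
    have h1 : Tendsto (fun k => f (xs k) - B) atTop (𝓝 (f xbar - B)) :=
      ((hfc.tendsto xbar).comp hxs).sub_const B
    have h2 : Tendsto (fun k => 2*(eps k)) atTop (𝓝 (2*0)) := heps.const_mul 2
    have := h2.mul h1
    simpa using this
  have hsq : Tendsto (fun k => ‖ps k - xs k‖^2) atTop (𝓝 0) :=
    squeeze_zero (fun k => by positivity) hdist htend0
  have hn : Tendsto (fun k => ‖ps k - xs k‖) atTop (𝓝 0) := by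
    have h1 := (Real.continuous_sqrt.tendsto 0).comp hsq
    have h2 : (fun k => Real.sqrt (‖ps k - xs k‖^2)) = fun k => ‖ps k - xs k‖ :=
      funext fun k => Real.sqrt_sq (norm_nonneg _)
    rw [Function.comp_def, h2, Real.sqrt_zero] at h1
    exact h1
  have hps : Tendsto ps atTop (𝓝 xbar) := by
    have h0 : Tendsto (fun k => xs k - ps k) atTop (𝓝 0) := by
      rw [tendsto_zero_iff_norm_tendsto_zero]
      have : (fun k => ‖xs k - ps k‖) = fun k => ‖ps k - xs k‖ :=
        funext fun k => norm_sub_rev _ _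
      rw [this]; exact hn
    have := hxs.sub h0
    simpa using this
  have hineq : ∀ k, f (ps k) + ρ/2*‖ps k‖^2 + ⟪vs k + ρ • ps k, w - ps k⟫
      ≤ f w + ρ/2*‖w‖^2 := by
    intro k
    have := prox_subgrad hρ hwc (heps0 k) (hmem k) w
    rw [← hvs k] at this
    exact this
  have hL : Tendsto (fun k => f (ps k) + ρ/2*‖ps k‖^2 + ⟪vs k + ρ • ps k, w - ps k⟫)
      atTop (𝓝 (f xbar + ρ/2*‖xbar‖^2 + ⟪u + ρ • xbar, w - xbar⟫)) := by
    have h1 : Tendsto (fun k => f (ps k)) atTop (𝓝 (f xbar)) := (hfc.tendsto xbar).comp hps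
    have h2 : Tendsto (fun k => ‖ps k‖^2) atTop (𝓝 (‖xbar‖^2)) :=
      ((continuous_norm.pow 2).tendsto xbar).comp hps
    have h3 : Tendsto (fun k => vs k + ρ • ps k) atTop (𝓝 (u + ρ • xbar)) :=
      hv.add (hps.const_smul ρ)
    have h4 : Tendsto (fun k => w - ps k) atTop (𝓝 (w - xbar)) :=
      tendsto_const_nhds.sub hps
    exact (h1.add (h2.const_mul (ρ/2))).add (h3.inner h4)
  exact le_of_tendsto hL (Filter.Eventually.of_forall hineq)

/-- norm bound for the prox-gradient, given any subgradient `u`. -/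
private lemma vnorm_bound (hρ : 0 < ρ)
    (hwc : ConvexOn ℝ Set.univ (fun x => f x + ρ / 2 * ‖x‖ ^ 2))
    (hbdd : BddBelow (Set.range f)) {ε : ℝ} (hε0 : 0 < ε) (hε1 : ε < ρ⁻¹) {xbar u : H}
    (hu : ∀ w, f xbar + ρ/2*‖xbar‖^2 + ⟪u + ρ • xbar, w - xbar⟫ ≤ f w + ρ/2*‖w‖^2) :
    ‖(1/ε) • (xbar - proxPt f ε xbar)‖ ≤ ‖u‖/(1 - ρ*ε) := by
  have hσ := one_sub_rho_eps_pos hρ hε1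
  set p : H := proxPt f ε xbar with hp_def
  set v : H := (1/ε) • (xbar - p) with hv_def
  have hx : xbar - p = ε • v := by
    rw [hv_def, smul_smul]
    have h : ε * (1/ε) = 1 := by field_simp
    rw [h, one_smul]
  have h1 := prox_subgrad hρ hwc hε0 (proxPt_mem hwc hbdd hε0 xbar) xbar
  rw [← hp_def, ← hv_def] at h1
  have h2 := hu p
  clear_value v p
  have e1 : ⟪v + ρ • p, xbar - p⟫ = ε*‖v‖^2 + ε*ρ*⟪p, v⟫ := by
    rw [hx, real_inner_smul_right, inner_add_left, real_inner_self_eq_norm_sq,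
      real_inner_smul_left]
    ring
  have e2 : p - xbar = -(ε • v) := by rw [← hx, neg_sub]
  have e3 : ⟪u + ρ • xbar, p - xbar⟫ = -(ε*⟪u, v⟫ + ε*ρ*⟪xbar, v⟫) := by
    rw [e2, inner_neg_right, real_inner_smul_right, inner_add_left, real_inner_smul_left]
    ring
  have e4 : ⟪p, v⟫ = ⟪xbar, v⟫ - ε*‖v‖^2 := by
    have hpe : p = xbar - ε • v := by rw [← hx]; abel
    rw [hpe, inner_sub_left, real_inner_smul_left, real_inner_self_eq_norm_sq]
  rw [e1] at h1
  rw [e3] at h2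
  have hsum : ε*((1 - ρ*ε)*‖v‖^2 - ⟪u, v⟫) ≤ ε*0 := by nlinarith [h1, h2, e4]
  have hkey : (1 - ρ*ε)*‖v‖^2 ≤ ⟪u, v⟫ := by
    have := le_of_mul_le_mul_left hsum hε0
    linarith
  have hcs : ⟪u, v⟫ ≤ ‖u‖*‖v‖ := real_inner_le_norm _ _
  rcases eq_or_lt_of_le (norm_nonneg v) with h0 | h0
  · rw [← h0]; positivity
  · rw [le_div_iff₀ hσ]
    nlinarith [hkey, hcs, h0]

end Aux6
section Aux7

variable {H : Type*} [NormedAddCommGroup H] [InnerProductSpace ℝ H] [FiniteDimensional ℝ H]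
variable {f : H → ℝ} {ρ : ℝ}

private lemma clarke_closed (hρ : 0 < ρ)
    (hwc : ConvexOn ℝ Set.univ (fun x => f x + ρ / 2 * ‖x‖ ^ 2)) (xbar : H) :
    IsClosed (clarkeSubdiff f xbar) := by
  have hrepr : clarkeSubdiff f xbar = ⋂ w : H,
      {u : H | f xbar + ρ/2*‖xbar‖^2 + ⟪u + ρ • xbar, w - xbar⟫ ≤ f w + ρ/2*‖w‖^2} := by
    ext u
    rw [Set.mem_iInter]
    exact clarke_char hρ hwc xbar u
  rw [hrepr]
  refine isClosed_iInter fun w => isClosed_le ?_ continuous_const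
  exact continuous_const.add ((continuous_id.add continuous_const).inner continuous_const)

private lemma prox_tendsto_self
    (hwc : ConvexOn ℝ Set.univ (fun x => f x + ρ / 2 * ‖x‖ ^ 2))
    (hbdd : BddBelow (Set.range f)) {xbar : H} {eps : ℕ → ℝ} {xs : ℕ → H}
    (heps0 : ∀ k, 0 < eps k) (heps : Tendsto eps atTop (𝓝 0))
    (hxs : Tendsto xs atTop (𝓝 xbar)) :
    Tendsto (fun k => proxPt f (eps k) (xs k)) atTop (𝓝 xbar) := by
  set ps : ℕ → H := fun k => proxPt f (eps k) (xs k) with hps_def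
  have hmem : ∀ k, ps k ∈ proxSet f (eps k) (xs k) :=
    fun k => proxPt_mem hwc hbdd (heps0 k) (xs k)
  obtain ⟨B, hB⟩ := hbdd
  have hBf : ∀ z, B ≤ f z := fun z => hB ⟨z, rfl⟩
  have hfc := fcont hwc
  have hdist : ∀ k, ‖ps k - xs k‖^2 ≤ 2*(eps k)*(f (xs k) - B) := by
    intro k
    have h1 := (mem_proxSet_iff (heps0 k)).1 (hmem k) (xs k)
    rw [sub_self, norm_zero] at h1
    have h2 := mul_le_mul_of_nonneg_left (hBf (ps k))
      (by have := heps0 k; positivity : (0:ℝ) ≤ 2*eps k)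
    nlinarith [h1, h2]
  have htend0 : Tendsto (fun k => 2*(eps k)*(f (xs k) - B)) atTop (𝓝 0) := by
    have h1 : Tendsto (fun k => f (xs k) - B) atTop (𝓝 (f xbar - B)) :=
      ((hfc.tendsto xbar).comp hxs).sub_const B
    have h2 : Tendsto (fun k => 2*(eps k)) atTop (𝓝 (2*0)) := heps.const_mul 2
    have := h2.mul h1
    simpa using this
  have hsq : Tendsto (fun k => ‖ps k - xs k‖^2) atTop (𝓝 0) :=
    squeeze_zero (fun k => by positivity) hdist htend0
  have hn : Tendsto (fun k => ‖ps k - xs k‖) atTop (𝓝 0) := by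
    have h1 := (Real.continuous_sqrt.tendsto 0).comp hsq
    have h2 : (fun k => Real.sqrt (‖ps k - xs k‖^2)) = fun k => ‖ps k - xs k‖ :=
      funext fun k => Real.sqrt_sq (norm_nonneg _)
    rw [Function.comp_def, h2, Real.sqrt_zero] at h1
    exact h1
  have h0 : Tendsto (fun k => xs k - ps k) atTop (𝓝 0) := by
    rw [tendsto_zero_iff_norm_tendsto_zero]
    have : (fun k => ‖xs k - ps k‖) = fun k => ‖ps k - xs k‖ :=
      funext fun k => norm_sub_rev _ _
    rw [this]; exact hn
  have := hxs.sub h0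
  simpa using this

/-- Any subgradient of `F` at a point near `xbar` has norm bounded by extremal values of
`F` on balls around `xbar`. -/
private lemma subgrad_norm_le (hρ : 0 < ρ)
    (hwc : ConvexOn ℝ Set.univ (fun x => f x + ρ / 2 * ‖x‖ ^ 2)) {xbar p s : H}
    (hclose : p ∈ Metric.closedBall xbar 1)
    (h : ∀ w, f p + ρ/2*‖p‖^2 + ⟪s, w - p⟫ ≤ f w + ρ/2*‖w‖^2)
    {M₀ M₁ : ℝ} (hM₀ : ∀ z ∈ Metric.closedBall xbar 2, f z + ρ/2*‖z‖^2 ≤ M₁)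
    (hM₁ : ∀ z ∈ Metric.closedBall xbar 1, M₀ ≤ f z + ρ/2*‖z‖^2) :
    ‖s‖ ≤ M₁ - M₀ := by
  have hsub : Metric.closedBall xbar 1 ⊆ Metric.closedBall xbar 2 :=
    Metric.closedBall_subset_closedBall (by norm_num)
  have hpM : f p + ρ/2*‖p‖^2 ≤ M₁ := hM₀ p (hsub hclose)
  have hpM' : M₀ ≤ f p + ρ/2*‖p‖^2 := hM₁ p hclose
  rcases eq_or_lt_of_le (norm_nonneg s) with h0 | h0
  · rw [← h0]; linarith
  · set e : H := ‖s‖⁻¹ • s with he_def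
    have hne : ‖e‖ = 1 := by
      rw [he_def, norm_smul, norm_inv, norm_norm, inv_mul_cancel₀ h0.ne']
    have hinner : ⟪s, e⟫ = ‖s‖ := by
      rw [he_def, real_inner_smul_right, real_inner_self_eq_norm_sq]
      field_simp
    have hmem : p + e ∈ Metric.closedBall xbar 2 := by
      rw [Metric.mem_closedBall, dist_eq_norm]
      have h1 : p + e - xbar = (p - xbar) + e := by abel
      rw [h1]
      have h2 := norm_add_le (p - xbar) e
      have h3 : ‖p - xbar‖ ≤ 1 := by
        rw [Metric.mem_closedBall, dist_eq_norm] at hclose; exact hclose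
      rw [hne] at h2
      linarith
    have h4 := h (p + e)
    have h5 : p + e - p = e := by abel
    rw [h5, hinner] at h4
    have h6 : f (p + e) + ρ/2*‖p + e‖^2 ≤ M₁ := hM₀ _ hmem
    linarith

private lemma minnorm_exists (hρ : 0 < ρ)
    (hwc : ConvexOn ℝ Set.univ (fun x => f x + ρ / 2 * ‖x‖ ^ 2))
    (hbdd : BddBelow (Set.range f)) (xbar : H) :
    ∃ g, IsMinNormElt (clarkeSubdiff f xbar) g := by
  have hfc := fcont hwc
  have hFc : Continuous (fun z : H => f z + ρ/2*‖z‖^2) :=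
    hfc.add (continuous_const.mul (continuous_norm.pow 2))
  obtain ⟨z₁, hz₁mem, hz₁⟩ := (isCompact_closedBall xbar 2).exists_isMaxOn
    ⟨xbar, by simp⟩ hFc.continuousOn
  obtain ⟨z₀, hz₀mem, hz₀⟩ := (isCompact_closedBall xbar 1).exists_isMinOn
    ⟨xbar, by simp⟩ hFc.continuousOn
  set M₁ : ℝ := f z₁ + ρ/2*‖z₁‖^2 with hM₁def
  set M₀ : ℝ := f z₀ + ρ/2*‖z₀‖^2 with hM₀def
  have hM₀ : ∀ z ∈ Metric.closedBall xbar 2, f z + ρ/2*‖z‖^2 ≤ M₁ := fun z hz => hz₁ hz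
  have hM₁ : ∀ z ∈ Metric.closedBall xbar 1, M₀ ≤ f z + ρ/2*‖z‖^2 := fun z hz => hz₀ hz
  -- a sequence of prox gradients at xbar
  set eps : ℕ → ℝ := fun k => ρ⁻¹/(k+2) with heps_def
  have heps0 : ∀ k, 0 < eps k := fun k => by rw [heps_def]; positivity
  have heps1 : ∀ k, eps k < ρ⁻¹ := by
    intro k
    rw [heps_def]
    rw [div_lt_iff₀ (by positivity : (0:ℝ) < (k:ℝ)+2)]
    have h1 : (1:ℝ) < (k:ℝ)+2 := by
      have : (0:ℝ) ≤ (k:ℝ) := Nat.cast_nonneg k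
      linarith
    nlinarith [inv_pos.2 hρ]
  have heps : Tendsto eps atTop (𝓝 0) := by
    rw [heps_def]
    have h1 : Tendsto (fun k : ℕ => 1/((k:ℝ)+2)) atTop (𝓝 0) := by
      have := (tendsto_one_div_add_atTop_nhds_zero_nat (𝕜 := ℝ)).comp (tendsto_add_atTop_nat 1)
      simp only [Function.comp_def] at this
      convert this using 2 with k
      push_cast
      ring
    have h2 := h1.const_mul ρ⁻¹
    simp only [mul_zero] at h2
    convert h2 using 2 with k
    ring
  set ps : ℕ → H := fun k => proxPt f (eps k) xbar with hps_def
  set vs : ℕ → H := fun k => (1/eps k) • (xbar - ps k) with hvs_def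
  have hps : Tendsto ps atTop (𝓝 xbar) :=
    prox_tendsto_self hwc hbdd heps0 heps tendsto_const_nhds
  have hsubg : ∀ k w, f (ps k) + ρ/2*‖ps k‖^2 + ⟪vs k + ρ • ps k, w - ps k⟫
      ≤ f w + ρ/2*‖w‖^2 :=
    fun k w => prox_subgrad hρ hwc (heps0 k) (proxPt_mem hwc hbdd (heps0 k) xbar) w
  have hball : ∀ᶠ k in atTop, ps k ∈ Metric.closedBall xbar 1 :=
    hps.eventually (Metric.closedBall_mem_nhds xbar one_pos)
  have hbound : ∀ᶠ k in atTop, ‖vs k‖ ≤ (M₁ - M₀) + ρ*(‖xbar‖+1) := by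
    filter_upwards [hball] with k hk
    have h1 : ‖vs k + ρ • ps k‖ ≤ M₁ - M₀ :=
      subgrad_norm_le hρ hwc hk (hsubg k) hM₀ hM₁
    have h2 : ‖ps k‖ ≤ ‖xbar‖ + 1 := by
      have h3 : ‖ps k - xbar‖ ≤ 1 := by
        rw [Metric.mem_closedBall, dist_eq_norm] at hk; exact hk
      have := norm_sub_norm_le (ps k) xbar
      linarith
    have h4 : ‖vs k‖ ≤ ‖vs k + ρ • ps k‖ + ‖ρ • ps k‖ := by
      have := norm_sub_le (vs k + ρ • ps k) (ρ • ps k)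
      simpa using this
    have h5 : ‖ρ • ps k‖ = ρ * ‖ps k‖ := by
      rw [norm_smul, Real.norm_eq_abs, abs_of_pos hρ]
    nlinarith [h1, h2, h4, h5, hρ.le]
  obtain ⟨N, hN⟩ := hbound.exists_forall_of_atTop
  set R : ℝ := (M₁ - M₀) + ρ*(‖xbar‖+1) with hRdef
  have hws : ∀ k, vs (k + N) ∈ Metric.closedBall (0:H) R := by
    intro k
    rw [Metric.mem_closedBall, dist_zero_right]
    exact hN (k + N) (Nat.le_add_left N k)
  obtain ⟨a, _, φ, hφ, ha⟩ := tendsto_subseq_of_bounded Metric.isBounded_closedBall hws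
  have hφat : Tendsto (fun k => φ k + N) atTop atTop :=
    tendsto_atTop_mono (fun k => le_trans hφ.le_apply (Nat.le_add_right _ N)) tendsto_id
  have haS : a ∈ clarkeSubdiff f xbar := by
    rw [clarke_char hρ hwc]
    intro w
    exact limit_subgrad hρ hwc hbdd (fun k => heps0 (φ k + N)) (heps.comp hφat)
      tendsto_const_nhds (fun k => rfl) ha w
  -- the Clarke subdifferential is compact
  have hSsub : clarkeSubdiff f xbar ⊆ Metric.closedBall (0:H) ((M₁ - M₀) + ρ*‖xbar‖) := by
    intro u hu
    have h := (clarke_char hρ hwc xbar u).1 hu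
    have h1 : ‖u + ρ • xbar‖ ≤ M₁ - M₀ :=
      subgrad_norm_le hρ hwc (by simp : xbar ∈ Metric.closedBall xbar 1) h hM₀ hM₁
    have h2 : ‖u‖ ≤ ‖u + ρ • xbar‖ + ‖ρ • xbar‖ := by
      have := norm_sub_le (u + ρ • xbar) (ρ • xbar)
      simpa using this
    have h3 : ‖ρ • xbar‖ = ρ * ‖xbar‖ := by
      rw [norm_smul, Real.norm_eq_abs, abs_of_pos hρ]
    rw [Metric.mem_closedBall, dist_zero_right]
    linarith
  have hScpt : IsCompact (clarkeSubdiff f xbar) :=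
    (isCompact_closedBall (0:H) _).of_isClosed_subset (clarke_closed hρ hwc xbar) hSsub
  obtain ⟨g, hgS, hgmin⟩ := hScpt.exists_isMinOn ⟨a, haS⟩ continuous_norm.continuousOn
  exact ⟨g, hgS, fun v hv => hgmin hv⟩

end Aux7

section Aux8

variable {H : Type*} [NormedAddCommGroup H] [InnerProductSpace ℝ H] [FiniteDimensional ℝ H]
variable {f : H → ℝ} {ρ : ℝ}

private lemma minnorm_unique (hρ : 0 < ρ)
    (hwc : ConvexOn ℝ Set.univ (fun x => f x + ρ / 2 * ‖x‖ ^ 2)) {xbar g u : H}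
    (hg : IsMinNormElt (clarkeSubdiff f xbar) g)
    (huS : u ∈ clarkeSubdiff f xbar) (hun : ‖u‖ ≤ ‖g‖) : u = g := by
  have hmS : (1/2 : ℝ) • (u + g) ∈ clarkeSubdiff f xbar := by
    rw [clarke_char hρ hwc]
    intro w
    have h1 := (clarke_char hρ hwc xbar u).1 huS w
    have h2 := (clarke_char hρ hwc xbar g).1 hg.1 w
    have hm : (1/2 : ℝ) • (u + g) + ρ • xbar
        = (1/2 : ℝ) • ((u + ρ • xbar) + (g + ρ • xbar)) := by module
    rw [hm, real_inner_smul_left, inner_add_left]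
    linarith
  have hgm : ‖g‖ ≤ ‖(1/2 : ℝ) • (u + g)‖ := hg.2 _ hmS
  have hms : ‖(1/2 : ℝ) • (u + g)‖ = (1/2) * ‖u + g‖ := by
    rw [norm_smul, Real.norm_eq_abs]
    norm_num
  have hpar1 : ‖u + g‖^2 = ‖u‖^2 + 2*⟪u, g⟫ + ‖g‖^2 := norm_add_sq_real _ _
  have hpar2 : ‖u - g‖^2 = ‖u‖^2 - 2*⟪u, g⟫ + ‖g‖^2 := norm_sub_sq_real _ _
  have h2g : 2*‖g‖ ≤ ‖u + g‖ := by linarith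
  have h2gsq : (2*‖g‖)*(2*‖g‖) ≤ ‖u + g‖*‖u + g‖ := mul_self_le_mul_self (by positivity) h2g
  have husq : ‖u‖*‖u‖ ≤ ‖g‖*‖g‖ := mul_self_le_mul_self (norm_nonneg u) hun
  have hz : ‖u - g‖^2 ≤ 0 := by nlinarith [hpar1, hpar2, h2gsq, husq]
  have : ‖u - g‖ = 0 := by nlinarith [sq_nonneg ‖u - g‖, norm_nonneg (u - g)]
  rw [norm_eq_zero, sub_eq_zero] at this
  exact this

private lemma vs_lim_eq (hρ : 0 < ρ)
    (hwc : ConvexOn ℝ Set.univ (fun x => f x + ρ / 2 * ‖x‖ ^ 2))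
    (hbdd : BddBelow (Set.range f)) {xbar g : H}
    (hg : IsMinNormElt (clarkeSubdiff f xbar) g) {del : ℕ → ℝ}
    (hdel0 : ∀ k, 0 < del k) (hdel1 : ∀ k, del k < ρ⁻¹) (hdel : Tendsto del atTop (𝓝 0))
    {u : H}
    (hu : Tendsto (fun k => (1/del k) • (xbar - proxPt f (del k) xbar)) atTop (𝓝 u)) :
    u = g := by
  have huS : u ∈ clarkeSubdiff f xbar := by
    rw [clarke_char hρ hwc]
    intro w
    exact limit_subgrad hρ hwc hbdd hdel0 hdel tendsto_const_nhds (fun k => rfl) hu w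
  have hgchar := (clarke_char hρ hwc xbar g).1 hg.1
  have hbd : ∀ k, ‖(1/del k) • (xbar - proxPt f (del k) xbar)‖ ≤ ‖g‖/(1 - ρ*del k) :=
    fun k => vnorm_bound hρ hwc hbdd (hdel0 k) (hdel1 k) hgchar
  have hlim2 : Tendsto (fun k => ‖g‖/(1 - ρ*del k)) atTop (𝓝 (‖g‖/(1 - ρ*0))) := by
    apply Tendsto.div tendsto_const_nhds
    · exact tendsto_const_nhds.sub (hdel.const_mul ρ)
    · norm_num
  rw [mul_zero, sub_zero, div_one] at hlim2
  have hun : ‖u‖ ≤ ‖g‖ := le_of_tendsto_of_tendsto' hu.norm hlim2 hbd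
  exact minnorm_unique hρ hwc hg huS hun

private lemma vs_tendsto_minnorm (hρ : 0 < ρ)
    (hwc : ConvexOn ℝ Set.univ (fun x => f x + ρ / 2 * ‖x‖ ^ 2))
    (hbdd : BddBelow (Set.range f)) {xbar g : H}
    (hg : IsMinNormElt (clarkeSubdiff f xbar) g) {del : ℕ → ℝ}
    (hdel0 : ∀ k, 0 < del k) (hdel1 : ∀ k, del k < ρ⁻¹)
    (hdel : Tendsto del atTop (𝓝 0)) :
    Tendsto (fun k => (1/del k) • (xbar - proxPt f (del k) xbar)) atTop (𝓝 g) := by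
  have hgchar := (clarke_char hρ hwc xbar g).1 hg.1
  apply Filter.tendsto_of_subseq_tendsto
  intro ns hns
  have hsmall : ∀ᶠ k in atTop, del (ns k) < 1/(2*ρ) :=
    (hdel.comp hns).eventually (gt_mem_nhds (by positivity : (0:ℝ) < 1/(2*ρ)))
  obtain ⟨N, hN⟩ := hsmall.exists_forall_of_atTop
  have hball : ∀ k, (1/del (ns (k + N))) • (xbar - proxPt f (del (ns (k + N))) xbar)
      ∈ Metric.closedBall (0:H) (2*‖g‖) := by
    intro k
    rw [Metric.mem_closedBall, dist_zero_right]
    have h1 := vnorm_bound hρ hwc hbdd (hdel0 (ns (k+N))) (hdel1 (ns (k+N))) hgchar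
    have h2 : del (ns (k+N)) < 1/(2*ρ) := hN (k+N) (Nat.le_add_left N k)
    have h3 : 1/2 ≤ 1 - ρ*del (ns (k+N)) := by
      have h4 : ρ * del (ns (k+N)) < ρ * (1/(2*ρ)) := mul_lt_mul_of_pos_left h2 hρ
      have h5 : ρ * (1/(2*ρ)) = 1/2 := by field_simp
      linarith
    have h6 : ‖g‖/(1 - ρ*del (ns (k+N))) ≤ ‖g‖/(1/2) := by
      apply div_le_div_of_nonneg_left (norm_nonneg g) (by norm_num) h3
    have h7 : ‖g‖/(1/2 : ℝ) = 2*‖g‖ := by ring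
    linarith
  obtain ⟨a, _, φ, hφ, ha⟩ := tendsto_subseq_of_bounded Metric.isBounded_closedBall hball
  have hφat : Tendsto (fun k => ns (φ k + N)) atTop atTop := by
    apply hns.comp
    exact tendsto_atTop_mono (fun k => le_trans hφ.le_apply (Nat.le_add_right _ N)) tendsto_id
  have hag : a = g := by
    refine vs_lim_eq hρ hwc hbdd hg (fun k => hdel0 (ns (φ k + N)))
      (fun k => hdel1 (ns (φ k + N))) (hdel.comp hφat) ha
  exact ⟨fun k => φ k + N, hag ▸ ha⟩

end Aux8

/-- for a `ρ`-weakly convex `f` bounded from below, for every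
`ε ∈ (0, ρ⁻¹)` the proximal map is single-valued and continuous and the Moreau
envelope is continuously differentiable with `∇ e_ε f (x) = (x - P_ε f (x)) / ε`;
moreover, for any fixed `ε̄ ∈ (0, ρ⁻¹)`, the map `(x, ε) ↦ ∇ e_{min{ε, ε̄}} f (x)`
is a descent-oriented subdifferential for `f`. -/
theorem moreau_gradient_descentOriented {n : ℕ}
    (f : EuclideanSpace ℝ (Fin n) → ℝ) (ρ : ℝ) (hρ : 0 < ρ)
    (hwc : ConvexOn ℝ Set.univ (fun x => f x + ρ / 2 * ‖x‖ ^ 2))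
    (hbdd : BddBelow (Set.range f)) :
    (∀ ε ∈ Set.Ioo (0 : ℝ) ρ⁻¹,
      ∃ p : EuclideanSpace ℝ (Fin n) → EuclideanSpace ℝ (Fin n),
        Continuous p ∧ (∀ x, proxSet f ε x = {p x}) ∧
        ∀ x, HasGradientAt (moreauEnv f ε) ((1 / ε) • (x - p x)) x) ∧
    ∀ εbar ∈ Set.Ioo (0 : ℝ) ρ⁻¹,
      IsDescentOrientedSubdiff f
        (fun x ε => {gradient (moreauEnv f (if ε ≤ εbar then ε else εbar)) x}) := by

  constructor
  · rintro ε ⟨hε0, hε1⟩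
    exact ⟨proxPt f ε, proxPt_continuous hρ hwc hbdd hε0 hε1,
      proxSet_eq_singleton hρ hwc hbdd hε0 hε1,
      fun x => moreau_hasGradient hρ hwc hbdd hε0 hε1 x⟩
  · rintro εbar ⟨hb0, hb1⟩
    have hcond : ∀ ε : ℝ, 0 < ε →
        0 < (if ε ≤ εbar then ε else εbar) ∧ (if ε ≤ εbar then ε else εbar) < ρ⁻¹ := by
      intro ε hε
      split_ifs with h
      · exact ⟨hε, lt_of_le_of_lt h hb1⟩
      · exact ⟨hb0, hb1⟩
    have hgradeq : ∀ ε : ℝ, 0 < ε → ∀ x,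
        gradient (moreauEnv f (if ε ≤ εbar then ε else εbar)) x
          = (1/(if ε ≤ εbar then ε else εbar))
              • (x - proxPt f (if ε ≤ εbar then ε else εbar) x) := by
      intro ε hε x
      obtain ⟨h1, h2⟩ := hcond ε hε
      exact (moreau_hasGradient hρ hwc hbdd h1 h2 x).gradient
    have hepsmin : ∀ eps : ℕ → ℝ, Tendsto eps atTop (𝓝 0) →
        Tendsto (fun k => if eps k ≤ εbar then eps k else εbar) atTop (𝓝 0) := by
      intro eps h0
      have h1 : (fun k => if eps k ≤ εbar then eps k else εbar)
          = fun k => min (eps k) εbar := funext fun k => (min_def _ _).symm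
      rw [h1]
      have h2 := h0.min (tendsto_const_nhds : Tendsto (fun _ : ℕ => εbar) atTop (𝓝 εbar))
      rwa [min_eq_left hb0.le] at h2
    refine ⟨fun ε hε x => isClosed_singleton, ?_, ?_, ?_⟩
    · -- locBounded
      intro ε hε x
      obtain ⟨h1, h2⟩ := hcond ε hε
      have hσ := one_sub_rho_eps_pos hρ h2
      refine ⟨1, one_pos, ‖gradient (moreauEnv f (if ε ≤ εbar then ε else εbar)) x‖
        + (1/(if ε ≤ εbar then ε else εbar))*(1 + 2/(1 - ρ*(if ε ≤ εbar then ε else εbar))),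
        ?_⟩
      intro y hy v hv
      rw [Set.mem_singleton_iff] at hv
      subst hv
      rw [hgradeq ε hε y, hgradeq ε hε x]
      have hlip := vfield_lipschitz hρ hwc hbdd h1 h2 x y
      have htri := norm_sub_le_norm_sub_add_norm_sub
        ((1/(if ε ≤ εbar then ε else εbar)) • (y - proxPt f (if ε ≤ εbar then ε else εbar) y))
        ((1/(if ε ≤ εbar then ε else εbar)) • (x - proxPt f (if ε ≤ εbar then ε else εbar) x))
        0
      have htri' : ‖(1/(if ε ≤ εbar then ε else εbar))
            • (y - proxPt f (if ε ≤ εbar then ε else εbar) y)‖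
          ≤ ‖(1/(if ε ≤ εbar then ε else εbar))
            • (y - proxPt f (if ε ≤ εbar then ε else εbar) y)
            - (1/(if ε ≤ εbar then ε else εbar))
            • (x - proxPt f (if ε ≤ εbar then ε else εbar) x)‖
          + ‖(1/(if ε ≤ εbar then ε else εbar))
            • (x - proxPt f (if ε ≤ εbar then ε else εbar) x)‖ := by
        simpa using htri
      have hC : (0:ℝ) ≤ (1/(if ε ≤ εbar then ε else εbar))
          *(1 + 2/(1 - ρ*(if ε ≤ εbar then ε else εbar))) := by positivity
      have hyx : ‖y - x‖ ≤ 1 := hy.le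
      nlinarith [hlip, htri', hC, norm_nonneg (y - x)]
    · -- outerClarke
      intro xbar u hu
      obtain ⟨eps, xs, vs, heps0, heps, hxs, hmem, hv⟩ := hu
      have heps'0 : ∀ k, 0 < (if eps k ≤ εbar then eps k else εbar) :=
        fun k => (hcond _ (heps0 k)).1
      have hvs : ∀ k, vs k = (1/(if eps k ≤ εbar then eps k else εbar))
          • (xs k - proxPt f (if eps k ≤ εbar then eps k else εbar) (xs k)) := by
        intro k
        have h := hmem k
        rw [Set.mem_singleton_iff] at h
        rw [h, hgradeq (eps k) (heps0 k) (xs k)]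
      exact (clarke_char hρ hwc xbar u).2
        (fun w => limit_subgrad hρ hwc hbdd heps'0 (hepsmin eps heps) hxs hvs hv w)
    · -- minNormLimit
      intro xbar
      obtain ⟨g, hg⟩ := minnorm_exists hρ hwc hbdd xbar
      have hsml : ∀ ε : ℝ, 0 < ε →
          SetMapLimsup
            (fun x => {gradient (moreauEnv f (if ε ≤ εbar then ε else εbar)) x}) xbar
          = {(1/(if ε ≤ εbar then ε else εbar))
              • (xbar - proxPt f (if ε ≤ εbar then ε else εbar) xbar)} := by
        intro ε hε
        obtain ⟨h1, h2⟩ := hcond ε hε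
        ext u
        simp only [SetMapLimsup, Set.mem_setOf_eq, Set.mem_singleton_iff]
        constructor
        · rintro ⟨xs, vs, hxs, hmem, hlim⟩
          have hvs : ∀ k, vs k = (1/(if ε ≤ εbar then ε else εbar))
              • (xs k - proxPt f (if ε ≤ εbar then ε else εbar) (xs k)) := by
            intro k
            exact (hmem k).trans (hgradeq ε hε (xs k))
          have hcont : Continuous (fun z : EuclideanSpace ℝ (Fin n) =>
              (1/(if ε ≤ εbar then ε else εbar))
                • (z - proxPt f (if ε ≤ εbar then ε else εbar) z)) :=
            (continuous_id.sub (proxPt_continuous hρ hwc hbdd h1 h2)).fun_const_smul _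
          have hlim2 : Tendsto vs atTop (𝓝 ((1/(if ε ≤ εbar then ε else εbar))
              • (xbar - proxPt f (if ε ≤ εbar then ε else εbar) xbar))) := by
            rw [funext hvs]
            exact (hcont.tendsto xbar).comp hxs
          exact tendsto_nhds_unique hlim hlim2
        · rintro rfl
          refine ⟨fun _ => xbar, fun _ => (1/(if ε ≤ εbar then ε else εbar))
              • (xbar - proxPt f (if ε ≤ εbar then ε else εbar) xbar),
            tendsto_const_nhds, fun k => ?_, tendsto_const_nhds⟩
          exact (hgradeq ε hε xbar).symm
      refine ⟨g, hg, ?_, ?_⟩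
      · -- outer limit ⊆ {g}
        intro u hu
        obtain ⟨eps, vs, heps0, heps, hmem, hlim⟩ := hu
        have heps'0 : ∀ k, 0 < (if eps k ≤ εbar then eps k else εbar) :=
          fun k => (hcond _ (heps0 k)).1
        have heps'1 : ∀ k, (if eps k ≤ εbar then eps k else εbar) < ρ⁻¹ :=
          fun k => (hcond _ (heps0 k)).2
        have hvs : ∀ k, vs k = (1/(if eps k ≤ εbar then eps k else εbar))
            • (xbar - proxPt f (if eps k ≤ εbar then eps k else εbar) xbar) := by
          intro k
          have h := hmem k
          simp only [hsml (eps k) (heps0 k), Set.mem_singleton_iff] at h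
          exact h
        rw [Set.mem_singleton_iff]
        exact vs_lim_eq hρ hwc hbdd hg heps'0 heps'1 (hepsmin eps heps)
          (funext hvs ▸ hlim)
      · -- {g} ⊆ inner limit
        intro u hu
        rw [Set.mem_singleton_iff] at hu
        subst hu
        intro eps hpos h0
        have heps'0 : ∀ k, 0 < (if eps k ≤ εbar then eps k else εbar) :=
          fun k => (hcond _ (hpos k)).1
        have heps'1 : ∀ k, (if eps k ≤ εbar then eps k else εbar) < ρ⁻¹ :=
          fun k => (hcond _ (hpos k)).2
        refine ⟨fun k => (1/(if eps k ≤ εbar then eps k else εbar))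
            • (xbar - proxPt f (if eps k ≤ εbar then eps k else εbar) xbar),
          Filter.Eventually.of_forall fun k => ?_, ?_⟩
        · simp only [hsml (eps k) (hpos k), Set.mem_singleton_iff]
        · exact vs_tendsto_minnorm hρ hwc hbdd hg heps'0 heps'1 (hepsmin eps h0)
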